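/- Let X := ℓ¹(ℕ), so X* = ℓ^∞(ℕ). For n ≥ 1 define T_n := P_{2n}(Sⁿ + I) on ℓ¹(ℕ), where S is the unilateral shift and P_{2n} is the projection onto the first 2n coordinates; its adjoint is T_n* = (S*ⁿ + I)P_{2n} on ℓ^∞(ℕ). Then: (a) for every φ ∈ c₀(ℕ), ‖T_n*φ − φ‖_∞ → 0 as n → ∞; (b) for every φ ∈ ℓ^∞(ℕ) \ c₀(ℕ), T_n*φ does not converge to φ in the weak* topology of ℓ^∞(ℕ) = (ℓ¹(ℕ))*; indeed ⟨T_n e₁ − e₁, φ⟩ = ⟨e_{n+1}, φ⟩ does not tend to 0. -/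
import Mathlib


open Filter Topology

/-- The adjoint operator `T n * = (S*ⁿ + I) P_{2n}` on `ℓ^∞`, acting on a bounded sequence `φ`
(written with 0-based indices: coordinate `k` here is coordinate `k+1` in the paper). -/
noncomputable def Tstar (n : ℕ) (φ : ℕ → ℂ) (k : ℕ) : ℂ :=
  (if k < n then φ (k + n) else 0) + (if k < 2 * n then φ k else 0)

/-- **Remark after Corollary 2.4.** On `X = ℓ¹(ℕ)` with `X* = ℓ^∞(ℕ)`, for
`T n := P_{2n}(Sⁿ + I)` with adjoint `T n * = (S*ⁿ + I) P_{2n}`: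
(a) for every `φ ∈ c₀(ℕ)`, `‖T n * φ − φ‖_∞ → 0`;
(b) for every bounded `φ ∉ c₀(ℕ)`, the pairing `⟨e₁, T n * φ − φ⟩` equals `φ` at index `n`
(which does not tend to `0`), and `T n * φ` does not converge to `φ` in the weak*-topology of
`ℓ^∞ = (ℓ¹)*`. -/
theorem ellInfty_counterexample :
    (∀ φ : ℕ → ℂ, Tendsto φ atTop (𝓝 0) →
      Tendsto (fun n : ℕ => ⨆ k : ℕ, ‖Tstar n φ k - φ k‖) atTop (𝓝 0)) ∧
    (∀ φ : ℕ → ℂ, (∃ C : ℝ, ∀ k, ‖φ k‖ ≤ C) → ¬ Tendsto φ atTop (𝓝 0) →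
      ((∀ n : ℕ, 1 ≤ n → Tstar n φ 0 - φ 0 = φ n) ∧
        ¬ (∀ x : ℕ → ℂ, Summable (fun k => ‖x k‖) →
          Tendsto (fun n : ℕ => ∑' k : ℕ, x k * Tstar n φ k) atTop
            (𝓝 (∑' k : ℕ, x k * φ k))))) := by
  constructor
  · intro φ hφ
    rw [Metric.tendsto_atTop]
    intro ε hε
    obtain ⟨N, hN⟩ := (Metric.tendsto_atTop.mp hφ (ε / 2) (by linarith))
    refine ⟨N, fun n hn => ?_⟩
    have hbound : ∀ k, ‖Tstar n φ k - φ k‖ ≤ ε / 2 := by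
      intro k
      have hsmall : ∀ j, N ≤ j → ‖φ j‖ ≤ ε / 2 := fun j hj => by
        have := hN j hj
        rw [dist_zero_right] at this
        linarith
      unfold Tstar
      by_cases h1 : k < n
      · have h2 : k < 2 * n := by omega
        simp only [if_pos h1, if_pos h2]
        have : φ (k + n) + φ k - φ k = φ (k + n) := by ring
        rw [this]
        exact hsmall _ (by omega)
      · by_cases h2 : k < 2 * n
        · simp only [if_neg h1, if_pos h2]
          simp [hε.le]
          linarith
        · simp only [if_neg h1, if_neg h2]
          have : (0 : ℂ) + 0 - φ k = -φ k := by ring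
          rw [this, norm_neg]
          exact hsmall _ (by omega)
    have hsup_le : (⨆ k : ℕ, ‖Tstar n φ k - φ k‖) ≤ ε / 2 :=
      ciSup_le hbound
    have hsup_nonneg : 0 ≤ ⨆ k : ℕ, ‖Tstar n φ k - φ k‖ :=
      Real.iSup_nonneg (fun k => norm_nonneg _)
    rw [dist_zero_right, Real.norm_eq_abs, abs_of_nonneg hsup_nonneg]
    linarith
  · intro φ _ hnφ
    have key : ∀ n : ℕ, 1 ≤ n → Tstar n φ 0 - φ 0 = φ n := by
      intro n hn
      unfold Tstar
      have h1 : 0 < n := hn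
      have h2 : 0 < 2 * n := by omega
      simp only [if_pos h1, if_pos h2, Nat.zero_add]
      ring
    refine ⟨key, fun h => ?_⟩
    set x : ℕ → ℂ := fun k => if k = 0 then 1 else 0 with hx
    have hsum : Summable (fun k => ‖x k‖) := by
      apply summable_of_ne_finset_zero (s := {0})
      intro k hk
      simp only [Finset.mem_singleton] at hk
      simp [hx, hk]
    have h0 : ∀ f : ℕ → ℂ, (∑' k : ℕ, x k * f k) = f 0 := by
      intro f
      rw [tsum_eq_single 0]
      · simp [hx]
      · intro b hb
        simp [hx, hb]
    have htend := h x hsum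
    simp only [h0] at htend
    have htend2 : Tendsto (fun n : ℕ => Tstar n φ 0 - φ 0) atTop (𝓝 0) := by
      have := htend.sub_const (φ 0)
      simpa using this
    have : Tendsto φ atTop (𝓝 0) := by
      apply htend2.congr'
      filter_upwards [eventually_ge_atTop 1] with n hn
      exact key n hn
    exact hnφ this
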